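/- For every n ≥ 3, m(Cₙ) ≤ 2·m(P_{n−1}), where Cₙ is the cycle on n vertices and P_{n−1} is the path on n−1 vertices. -/

import Mathlib

open Finset SimpleGraph
open Fin.NatCast

/-- `c` is a subgraph sum-distinct (SSD) assignment of `G`: all values are positive and
distinct nonempty vertex subsets inducing connected subgraphs have distinct sums. -/
def IsSSD {V : Type*} [Fintype V] (G : SimpleGraph V) (c : V → ℕ) : Prop :=
  (∀ v, 0 < c v) ∧ ∀ s t : Finset V, s.Nonempty → t.Nonempty →
    (G.induce (↑s : Set V)).Connected → (G.induce (↑t : Set V)).Connected →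
    s ≠ t → ∑ v ∈ s, c v ≠ ∑ v ∈ t, c v

/-- `m(G)`: the minimum over all SSD assignments `c` of `G` of the maximum weight. -/
noncomputable def mval {V : Type*} [Fintype V] (G : SimpleGraph V) : ℕ :=
  sInf {N | ∃ c : V → ℕ, IsSSD G c ∧ Finset.univ.sup c = N}

/-- `M(G)`: the minimum total weight of an SSD assignment of `G`. -/
noncomputable def Mval {V : Type*} [Fintype V] (G : SimpleGraph V) : ℕ :=
  sInf {N | ∃ c : V → ℕ, IsSSD G c ∧ ∑ v, c v = N}

private lemma mod_two_cases (x n : ℕ) (h : x < 2 * n) :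
    x % n = if x < n then x else x - n := by
  split_ifs with h1
  · exact Nat.mod_eq_of_lt h1
  · have h2 : x - n < n := by omega
    have h3 : x = x - n + n := by omega
    rw [h3, Nat.add_mod_right, Nat.mod_eq_of_lt h2]
    omega

private lemma walk_ivt {V : Type*} {G : SimpleGraph V} (f : V → ℕ)
    (hadj : ∀ u v : V, G.Adj u v → f v = f u + 1 ∨ f u = f v + 1) :
    ∀ {u v : V} (w : G.Walk u v) (d : ℕ), f u ≤ d → d ≤ f v → ∃ x ∈ w.support, f x = d := by
  intro u v w
  induction w with
  | @nil a => exact fun d h1 h2 => ⟨a, by simp, by omega⟩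
  | @cons a b c h p ih =>
    intro d h1 h2
    rcases eq_or_lt_of_le h1 with he | hlt
    · exact ⟨a, SimpleGraph.Walk.start_mem_support _, he⟩
    · have hb : f b ≤ d := by rcases hadj _ _ h with h' | h' <;> omega
      obtain ⟨x, hx, hfx⟩ := ih d hb h2
      exact ⟨x, by simp [hx], hfx⟩

private lemma sum_two_pow_lt {n : ℕ} {s : Finset ℕ} (h : ∀ i ∈ s, i < n) :
    ∑ i ∈ s, 2 ^ i < 2 ^ n := by
  induction n generalizing s with
  | zero =>
    have : s = ∅ := Finset.eq_empty_of_forall_notMem (fun i hi => by simpa using h i hi)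
    simp [this]
  | succ n ih =>
    have hp : (0:ℕ) < 2 ^ n := Nat.pow_pos (by norm_num)
    have hpow : (2:ℕ) ^ (n+1) = 2 * 2 ^ n := by ring
    by_cases hm : n ∈ s
    · have h1 := ih (s := s.erase n) (fun i hi => by
        have hi1 := Finset.mem_erase.mp hi
        have := h i hi1.2
        omega)
      have h2 : 2 ^ n + ∑ i ∈ s.erase n, 2 ^ i = ∑ i ∈ s, 2 ^ i :=
        Finset.add_sum_erase _ _ hm
      omega
    · have h1 := ih (s := s) (fun i hi => by
        have := h i hi
        have : i ≠ n := fun e => hm (e ▸ hi)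
        omega)
      omega

private lemma sum_two_pow_inj : ∀ (n : ℕ) (s t : Finset ℕ), (∀ i ∈ s, i < n) → (∀ i ∈ t, i < n) →
    ∑ i ∈ s, 2 ^ i = ∑ i ∈ t, 2 ^ i → s = t := by
  intro n
  induction n with
  | zero =>
    intro s t hs ht _
    have h1 : s = ∅ := Finset.eq_empty_of_forall_notMem (fun i hi => by simpa using hs i hi)
    have h2 : t = ∅ := Finset.eq_empty_of_forall_notMem (fun i hi => by simpa using ht i hi)
    rw [h1, h2]
  | succ n ih =>
    intro s t hs ht hsum
    by_cases h1 : n ∈ s <;> by_cases h2 : n ∈ t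
    · have e1 : 2 ^ n + ∑ i ∈ s.erase n, 2 ^ i = ∑ i ∈ s, 2 ^ i := Finset.add_sum_erase _ _ h1
      have e2 : 2 ^ n + ∑ i ∈ t.erase n, 2 ^ i = ∑ i ∈ t, 2 ^ i := Finset.add_sum_erase _ _ h2
      have := ih (s.erase n) (t.erase n)
        (fun i hi => by have := Finset.mem_erase.mp hi; have := hs i this.2; omega)
        (fun i hi => by have := Finset.mem_erase.mp hi; have := ht i this.2; omega)
        (by omega)
      have := congrArg (insert n) this
      rwa [Finset.insert_erase h1, Finset.insert_erase h2] at this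
    · exfalso
      have l1 : ∑ i ∈ t, 2 ^ i < 2 ^ n := sum_two_pow_lt (fun i hi => by
        have := ht i hi
        have : i ≠ n := fun e => h2 (e ▸ hi)
        omega)
      have l2 : 2 ^ n ≤ ∑ i ∈ s, 2 ^ i := Finset.single_le_sum (f := fun i => 2 ^ i)
        (fun _ _ => Nat.zero_le _) h1
      omega
    · exfalso
      have l1 : ∑ i ∈ s, 2 ^ i < 2 ^ n := sum_two_pow_lt (fun i hi => by
        have := hs i hi
        have : i ≠ n := fun e => h1 (e ▸ hi)
        omega)
      have l2 : 2 ^ n ≤ ∑ i ∈ t, 2 ^ i := Finset.single_le_sum (f := fun i => 2 ^ i)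
        (fun _ _ => Nat.zero_le _) h2
      omega
    · exact ih s t
        (fun i hi => by have := hs i hi; have : i ≠ n := fun e => h1 (e ▸ hi); omega)
        (fun i hi => by have := ht i hi; have : i ≠ n := fun e => h2 (e ▸ hi); omega)
        hsum

private lemma nat_step (n bv uv vv : ℕ) (hn : 3 ≤ n) (hb : bv < n) (hu : uv < n) (hv : vv < n)
    (hub : uv ≠ bv) (hvb : vv ≠ bv)
    (hadj : (n - vv + uv) % n = 1 ∨ (n - uv + vv) % n = 1) :
    (n - bv + uv) % n = (n - bv + vv) % n + 1 ∨ (n - bv + vv) % n = (n - bv + uv) % n + 1 := by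
  rw [mod_two_cases (n - vv + uv) n (by omega), mod_two_cases (n - uv + vv) n (by omega)] at hadj
  rw [mod_two_cases (n - bv + uv) n (by omega), mod_two_cases (n - bv + vv) n (by omega)]
  split_ifs at hadj ⊢ <;> omega

private lemma nat_step_path (n uv vv : ℕ) (hn : 3 ≤ n) (hu : uv < n - 1) (hv : vv < n - 1)
    (hadj : (n - vv + uv) % n = 1 ∨ (n - uv + vv) % n = 1) :
    uv + 1 = vv ∨ vv + 1 = uv := by
  rw [mod_two_cases (n - vv + uv) n (by omega), mod_two_cases (n - uv + vv) n (by omega)] at hadj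
  split_ifs at hadj <;> omega

private lemma fin_sub_val {n : ℕ} (u b : Fin n) : (u - b).val = (n - b.val + u.val) % n := by
  rw [Fin.sub_def]

private lemma cycle_adj_step {n : ℕ} (hn : 3 ≤ n) {u v b : Fin n} (hu : u ≠ b) (hv : v ≠ b)
    (hadj : (cycleGraph n).Adj u v) :
    (u - b).val = (v - b).val + 1 ∨ (v - b).val = (u - b).val + 1 := by
  rw [cycleGraph_adj'] at hadj
  rw [fin_sub_val, fin_sub_val]
  rw [fin_sub_val, fin_sub_val] at hadj
  exact nat_step n b.val u.val v.val hn b.is_lt u.is_lt v.is_lt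
    (fun e => hu (Fin.ext e)) (fun e => hv (Fin.ext e)) hadj

private lemma fin_sub_inj {n : ℕ} {u v b : Fin n} (h : (u - b).val = (v - b).val) : u = v := by
  rcases Nat.eq_zero_or_pos n with rfl | hn
  · exact u.elim0
  rw [fin_sub_val, fin_sub_val] at h
  rw [mod_two_cases _ n (by omega), mod_two_cases _ n (by omega)] at h
  have := u.is_lt
  have := v.is_lt
  have := b.is_lt
  apply Fin.ext
  split_ifs at h <;> omega

private lemma cycle_arc {n : ℕ} (hn : 3 ≤ n) (s : Finset (Fin n)) (hne : s.Nonempty)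
    (hconn : ((cycleGraph n).induce (↑s : Set (Fin n))).Connected)
    {b : Fin n} (hb : b ∉ s) :
    ∃ m M : ℕ, 1 ≤ m ∧ m ≤ M ∧ M ≤ n - 1 ∧
      ∀ v : Fin n, v ∈ s ↔ (m ≤ (v - b).val ∧ (v - b).val ≤ M) := by
  classical
  set f : Fin n → ℕ := fun v => (v - b).val with hf
  have hfs : ∀ v ∈ s, 1 ≤ f v ∧ f v ≤ n - 1 := by
    intro v hv
    have hvb : v ≠ b := fun e => hb (e ▸ hv)
    have h1 : f v < n := (v - b).is_lt
    have h2 : f v ≠ 0 := by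
      intro h0
      apply hvb
      apply fin_sub_inj (b := b) (u := v) (v := b)
      have hbb : (b - b).val = 0 := by
        rw [fin_sub_val, mod_two_cases _ n (by omega)]
        split_ifs <;> omega
      rw [hbb]
      exact h0
    omega
  set D := s.image f with hD
  have hDne : D.Nonempty := hne.image f
  set m := D.min' hDne with hm
  set M := D.max' hDne with hM
  obtain ⟨u0, hu0s, hu0⟩ := Finset.mem_image.mp (D.min'_mem hDne)
  obtain ⟨v0, hv0s, hv0⟩ := Finset.mem_image.mp (D.max'_mem hDne)
  have hclosed : ∀ d, m ≤ d → d ≤ M → d ∈ D := by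
    intro d h1 h2
    obtain ⟨w⟩ := hconn.preconnected ⟨u0, hu0s⟩ ⟨v0, hv0s⟩
    have hadj : ∀ x y : (↑s : Set (Fin n)), ((cycleGraph n).induce (↑s : Set (Fin n))).Adj x y →
        f y.val = f x.val + 1 ∨ f x.val = f y.val + 1 := by
      intro x y hxy
      have hxy' : (cycleGraph n).Adj x.val y.val := by simpa using hxy
      have hx : x.val ≠ b := fun e => hb (e ▸ x.prop)
      have hy : y.val ≠ b := fun e => hb (e ▸ y.prop)
      rcases cycle_adj_step hn hx hy hxy' with h | h
      · exact Or.inr h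
      · exact Or.inl h
    obtain ⟨x, _, hx⟩ := walk_ivt (fun x : (↑s : Set (Fin n)) => f x.val) hadj w d
      (by simp only [hu0, ← hm]; exact h1) (by simp only [hv0, ← hM]; exact h2)
    exact Finset.mem_image.mpr ⟨x.val, x.prop, hx⟩
  have hmM : m ≤ M := Finset.min'_le _ _ (D.max'_mem hDne)
  refine ⟨m, M, ?_, hmM, ?_, ?_⟩
  · rw [hm, ← hu0]; exact (hfs u0 hu0s).1
  · rw [hM, ← hv0]; exact (hfs v0 hv0s).2
  · intro v
    constructor
    · intro hv
      have : f v ∈ D := Finset.mem_image_of_mem f hv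
      exact ⟨Finset.min'_le _ _ this, Finset.le_max' _ _ this⟩
    · rintro ⟨h1, h2⟩
      obtain ⟨u, hus, hu⟩ := Finset.mem_image.mp (hclosed (f v) h1 h2)
      have : u = v := fin_sub_inj hu
      exact this ▸ hus

private lemma fin_add_cast_val {n : ℕ} [NeZero n] (b : Fin n) (d : ℕ) (hd : d < n) :
    (b + (d : Fin n)).val = (b.val + d) % n := by
  rw [Fin.add_def]
  congr 1
  rw [Fin.val_natCast, Nat.mod_eq_of_lt hd]

private lemma nat_adj_succ (n a d : ℕ) (hn : 3 ≤ n) (ha : a < n) (hd : d + 1 ≤ n - 1) :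
    (n - ((a + d) % n) + ((a + d + 1) % n)) % n = 1 := by
  rw [mod_two_cases (a + d) n (by omega), mod_two_cases (a + d + 1) n (by omega)]
  split_ifs <;> rw [mod_two_cases _ n (by omega)] <;> split_ifs <;> omega

private lemma cycle_adj_succ {n : ℕ} [NeZero n] (hn : 3 ≤ n) (b : Fin n) (d : ℕ) (h1 : 1 ≤ d)
    (h2 : d + 1 ≤ n - 1) :
    (cycleGraph n).Adj (b + (d : Fin n)) (b + ((d + 1 : ℕ) : Fin n)) := by
  rw [cycleGraph_adj']
  right
  rw [fin_sub_val, fin_add_cast_val b d (by omega), fin_add_cast_val b (d+1) (by omega)]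
  exact nat_adj_succ n b.val d hn b.is_lt h2

private lemma arc_connected {n : ℕ} [NeZero n] (hn : 3 ≤ n) (b : Fin n) (L : ℕ) (hL : 1 ≤ L)
    (hLn : L ≤ n - 1) :
    ((cycleGraph n).induce
      (↑((Finset.Icc 1 L).image (fun d : ℕ => b + (d : Fin n))) : Set (Fin n))).Connected := by
  classical
  set S := (Finset.Icc 1 L).image (fun d : ℕ => b + (d : Fin n)) with hS
  have hmem : ∀ d : ℕ, 1 ≤ d → d ≤ L → b + (d : Fin n) ∈ S := fun d h1 h2 =>
    Finset.mem_image.mpr ⟨d, Finset.mem_Icc.mpr ⟨h1, h2⟩, rfl⟩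
  set G' := (cycleGraph n).induce (↑S : Set (Fin n)) with hG'
  have x0mem : b + ((1:ℕ) : Fin n) ∈ S := hmem 1 le_rfl hL
  set x0 : (↑S : Set (Fin n)) := ⟨b + ((1:ℕ) : Fin n), x0mem⟩ with hx0
  have key : ∀ d : ℕ, 1 ≤ d → ∀ v : (↑S : Set (Fin n)), v.val = b + (d : Fin n) → d ≤ L →
      G'.Reachable x0 v := by
    intro d hd
    induction d, hd using Nat.le_induction with
    | base =>
      intro v hv _
      have : v = x0 := Subtype.ext (by rw [hv])
      rw [this]
    | succ d hd ih =>
      intro v hv hdL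
      have humem : b + (d : Fin n) ∈ S := hmem d hd (by omega)
      have hreach := ih ⟨b + (d : Fin n), humem⟩ rfl (by omega)
      have hadj : G'.Adj ⟨b + (d : Fin n), humem⟩ v := by
        rw [hG']
        simp only [comap_adj, Function.Embedding.coe_subtype]
        rw [hv]
        exact cycle_adj_succ hn b d hd (by omega)
      exact hreach.trans hadj.reachable
  have hpre : G'.Preconnected := by
    intro x y
    obtain ⟨dx, hdx, hx⟩ := Finset.mem_image.mp (Finset.mem_coe.mp x.prop)
    obtain ⟨dy, hdy, hy⟩ := Finset.mem_image.mp (Finset.mem_coe.mp y.prop)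
    rw [Finset.mem_Icc] at hdx hdy
    exact (key dx hdx.1 x hx.symm hdx.2).symm.trans (key dy hdy.1 y hy.symm hdy.2)
  haveI : Nonempty (↑S : Set (Fin n)) := ⟨x0⟩
  exact ⟨hpre⟩

private lemma nat_compl (n bv vv M e : ℕ) (hn : 3 ≤ n) (hb : bv < n) (hv : vv < n) (hM : M < n)
    (he : e < n) (key : (M + e) % n = (n - bv + vv) % n) :
    ((bv + M) % n + e) % n = vv := by
  rw [mod_two_cases (M + e) n (by omega), mod_two_cases (n - bv + vv) n (by omega)] at key
  rw [mod_two_cases (bv + M) n (by omega)]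
  split_ifs at key ⊢ <;> rw [mod_two_cases _ n (by omega)] <;> split_ifs <;> omega

private lemma nat_compl2 (n bv M e m : ℕ) (hn : 3 ≤ n) (hb : bv < n) (h1 : 1 ≤ m) (h2 : m ≤ M)
    (h3 : M ≤ n - 1) (he1 : 1 ≤ e) (he2 : e ≤ n - 1 - (M - m)) :
    ¬(m ≤ (n - bv + (((bv + M) % n + e) % n)) % n ∧
      (n - bv + (((bv + M) % n + e) % n)) % n ≤ M) := by
  rw [mod_two_cases (bv + M) n (by omega)]
  split_ifs with hc1
  · rw [mod_two_cases (bv + M + e) n (by omega)]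
    split_ifs <;> rw [mod_two_cases _ n (by omega)] <;> split_ifs <;> omega
  · rw [mod_two_cases (bv + M - n + e) n (by omega)]
    split_ifs <;> rw [mod_two_cases _ n (by omega)] <;> split_ifs <;> omega

private lemma compl_arc {n : ℕ} [NeZero n] (hn : 3 ≤ n) (b : Fin n) (m M : ℕ) (h1 : 1 ≤ m) (h2 : m ≤ M)
    (h3 : M ≤ n - 1) (s : Finset (Fin n))
    (hs : ∀ v : Fin n, v ∈ s ↔ (m ≤ (v - b).val ∧ (v - b).val ≤ M)) :
    Finset.univ \ s = (Finset.Icc 1 (n - 1 - (M - m))).image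
      (fun d : ℕ => (b + (M : Fin n)) + (d : Fin n)) := by
  have hM : M < n := by omega
  ext v
  simp only [Finset.mem_sdiff, Finset.mem_univ, true_and, hs, Finset.mem_image, Finset.mem_Icc]
  have hd : (v - b).val < n := (v - b).is_lt
  constructor
  · intro hv
    rcases Nat.lt_or_ge (v - b).val m with hlow | hge
    · -- low case: e = n - M + (v-b).val
      refine ⟨n - M + (v - b).val, ⟨by omega, by omega⟩, ?_⟩
      have he : n - M + (v - b).val < n := by omega
      apply Fin.ext
      rw [fin_add_cast_val _ _ he, fin_add_cast_val b M hM]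
      apply nat_compl n b.val v.val M _ hn b.is_lt v.is_lt hM he
      rw [← fin_sub_val]
      have : M + (n - M + (v - b).val) = n + (v - b).val := by omega
      rw [this, Nat.add_mod_left, Nat.mod_eq_of_lt hd]
    · have hhigh : M < (v - b).val := by
        rcases Nat.lt_or_ge M (v - b).val with h | h
        · exact h
        · exact absurd ⟨hge, h⟩ hv
      refine ⟨(v - b).val - M, ⟨by omega, by omega⟩, ?_⟩
      have he : (v - b).val - M < n := by omega
      apply Fin.ext
      rw [fin_add_cast_val _ _ he, fin_add_cast_val b M hM]
      apply nat_compl n b.val v.val M _ hn b.is_lt v.is_lt hM he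
      rw [← fin_sub_val]
      have : M + ((v - b).val - M) = (v - b).val := by omega
      rw [this, Nat.mod_eq_of_lt hd]
  · rintro ⟨e, ⟨he1, he2⟩, rfl⟩
    have he : e < n := by omega
    rw [fin_sub_val, fin_add_cast_val _ _ he, fin_add_cast_val b M hM]
    exact nat_compl2 n b.val M e m hn b.is_lt h1 h2 h3 he1 he2

private lemma image_filter_eq {k : ℕ} (s : Finset (Fin (k+1))) (hlast : Fin.last k ∉ s) :
    (Finset.univ.filter (fun i : Fin k => Fin.castSucc i ∈ s)).image Fin.castSucc = s := by
  ext v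
  simp only [Finset.mem_image, Finset.mem_filter, Finset.mem_univ, true_and]
  constructor
  · rintro ⟨i, hi, rfl⟩; exact hi
  · intro hv
    have hne : v ≠ Fin.last k := fun e => hlast (e ▸ hv)
    exact ⟨v.castPred hne, by rwa [Fin.castSucc_castPred], Fin.castSucc_castPred _ _⟩

private lemma path_side {k : ℕ} (hk : 2 ≤ k) (s : Finset (Fin (k+1)))
    (hconn : ((cycleGraph (k+1)).induce (↑s : Set (Fin (k+1)))).Connected)
    (hlast : Fin.last k ∉ s) :
    ((pathGraph k).induce
      (↑(Finset.univ.filter (fun i : Fin k => Fin.castSucc i ∈ s)) : Set (Fin k))).Connected := by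
  classical
  set s₀ := Finset.univ.filter (fun i : Fin k => Fin.castSucc i ∈ s) with hs₀
  have hcsub : ∀ v : Fin (k+1), v ∈ s → v ≠ Fin.last k := fun v hv e => hlast (e ▸ hv)
  have hF : ∀ x : (↑s : Set (Fin (k+1))),
      x.val.castPred (hcsub _ (Finset.mem_coe.mp x.prop)) ∈ s₀ := by
    intro x
    rw [hs₀, Finset.mem_filter]
    refine ⟨Finset.mem_univ _, ?_⟩
    rw [Fin.castSucc_castPred]
    exact Finset.mem_coe.mp x.prop
  let F : (↑s : Set (Fin (k+1))) → (↑s₀ : Set (Fin k)) := fun x =>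
    ⟨x.val.castPred (hcsub _ (Finset.mem_coe.mp x.prop)), Finset.mem_coe.mpr (hF x)⟩
  have hmaprel : ∀ {a b : (↑s : Set (Fin (k+1)))},
      ((cycleGraph (k+1)).induce (↑s : Set (Fin (k+1)))).Adj a b →
      ((pathGraph k).induce (↑s₀ : Set (Fin k))).Adj (F a) (F b) := by
    intro a b hab
    have hab' : (cycleGraph (k+1)).Adj a.val b.val := by simpa using hab
    rw [cycleGraph_adj'] at hab'
    rw [fin_sub_val, fin_sub_val] at hab'
    have ha : a.val.val < k := Fin.val_lt_last (hcsub _ (Finset.mem_coe.mp a.prop))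
    have hb : b.val.val < k := Fin.val_lt_last (hcsub _ (Finset.mem_coe.mp b.prop))
    have := nat_step_path (k+1) a.val.val b.val.val (by omega) (by omega) (by omega) hab'
    simp only [comap_adj, Function.Embedding.coe_subtype]
    rw [pathGraph_adj]
    simp only [F, Fin.coe_castPred]
    omega
  have hsurj : Function.Surjective F := by
    rintro ⟨i, hi⟩
    have hmem : Fin.castSucc i ∈ s := by
      have := Finset.mem_coe.mp hi
      rw [hs₀, Finset.mem_filter] at this
      exact this.2
    refine ⟨⟨Fin.castSucc i, Finset.mem_coe.mpr hmem⟩, ?_⟩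
    apply Subtype.ext
    simp [F]
  exact hconn.map ⟨F, hmaprel⟩ hsurj


private lemma ssd_exists (k : ℕ) : IsSSD (SimpleGraph.pathGraph k) (fun i : Fin k => 2 ^ (i : ℕ)) := by
  refine ⟨fun v => Nat.pow_pos (by norm_num), ?_⟩
  intro s t _ _ _ _ hne hsum
  apply hne
  have h1 : ∑ v ∈ s, 2 ^ (v : ℕ) = ∑ i ∈ s.image Fin.val, 2 ^ i :=
    (Finset.sum_image (fun x _ y _ h => Fin.ext h)).symm
  have h2 : ∑ v ∈ t, 2 ^ (v : ℕ) = ∑ i ∈ t.image Fin.val, 2 ^ i :=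
    (Finset.sum_image (fun x _ y _ h => Fin.ext h)).symm
  have himg := sum_two_pow_inj k (s.image Fin.val) (t.image Fin.val)
    (fun i hi => by obtain ⟨x, _, rfl⟩ := Finset.mem_image.mp hi; exact x.is_lt)
    (fun i hi => by obtain ⟨x, _, rfl⟩ := Finset.mem_image.mp hi; exact x.is_lt)
    (by rw [← h1, ← h2]; exact hsum)
  exact Finset.image_injective Fin.val_injective himg

private lemma sum_image_castSucc {k : ℕ} (c : Fin k → ℕ)
    (c' : Fin (k+1) → ℕ)
    (hc' : ∀ i : Fin k, c' (Fin.castSucc i) = 2 * c i)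
    (s₀ : Finset (Fin k)) :
    ∑ v ∈ s₀.image Fin.castSucc, c' v = 2 * ∑ i ∈ s₀, c i := by
  rw [Finset.sum_image (fun x _ y _ h => Fin.castSucc_injective _ h), Finset.mul_sum]
  exact Finset.sum_congr rfl (fun i _ => by rw [hc' i])

/-- `m(Cₙ) ≤ 2 ⬝ m(P_{n-1})` for `n ≥ 3`. -/
theorem stmt_11 (n : ℕ) (hn : 3 ≤ n) :
    mval (SimpleGraph.cycleGraph n) ≤ 2 * mval (SimpleGraph.pathGraph (n - 1)) := by
  classical
  obtain ⟨k, rfl⟩ : ∃ k, n = k + 1 := ⟨n - 1, by omega⟩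
  have hk : 2 ≤ k := by omega
  haveI : NeZero (k+1) := ⟨by omega⟩
  show mval (SimpleGraph.cycleGraph (k+1)) ≤ 2 * mval (SimpleGraph.pathGraph k)
  -- obtain an optimal SSD assignment of the path
  have hSPne : Set.Nonempty {N | ∃ c : Fin k → ℕ, IsSSD (SimpleGraph.pathGraph k) c ∧
      Finset.univ.sup c = N} := ⟨_, _, ssd_exists k, rfl⟩
  obtain ⟨c, hc, hsup⟩ := Nat.sInf_mem hSPne
  set N := mval (SimpleGraph.pathGraph k) with hNdef
  have hsupN : Finset.univ.sup c = N := hsup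
  have hN1 : 1 ≤ N := by
    have h0 : (1 : ℕ) ≤ c ⟨0, by omega⟩ := hc.1 _
    exact le_trans h0 (hsupN ▸ Finset.le_sup (Finset.mem_univ _))
  -- the doubled assignment on the cycle
  set c' : Fin (k+1) → ℕ := fun v => if h : v = Fin.last k then 1 else 2 * c (v.castPred h)
    with hc'def
  have hc'last : c' (Fin.last k) = 1 := by rw [hc'def]; simp
  have hc'cast : ∀ i : Fin k, c' (Fin.castSucc i) = 2 * c i := by
    intro i
    rw [hc'def]
    have hne : Fin.castSucc i ≠ Fin.last k := (Fin.castSucc_lt_last i).ne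
    simp only [dif_neg hne, Fin.castPred_castSucc]
  have hc'pos : ∀ v, 0 < c' v := by
    intro v
    rw [hc'def]
    by_cases h : v = Fin.last k
    · simp [h]
    · simp only [dif_neg h]
      have := hc.1 (v.castPred h)
      omega
  -- parity facts
  have hpar_out : ∀ s : Finset (Fin (k+1)), Fin.last k ∉ s → 2 ∣ ∑ v ∈ s, c' v := by
    intro s hl
    refine Finset.dvd_sum (fun v hv => ?_)
    have hne : v ≠ Fin.last k := fun e => hl (e ▸ hv)
    have : v = Fin.castSucc (v.castPred hne) := (Fin.castSucc_castPred _ _).symm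
    rw [this, hc'cast]
    exact Dvd.intro _ rfl
  have hpar_in : ∀ s : Finset (Fin (k+1)), Fin.last k ∈ s → ¬ 2 ∣ ∑ v ∈ s, c' v := by
    intro s hl
    have heq : c' (Fin.last k) + ∑ v ∈ s.erase (Fin.last k), c' v = ∑ v ∈ s, c' v :=
      Finset.add_sum_erase _ _ hl
    have hdvd : 2 ∣ ∑ v ∈ s.erase (Fin.last k), c' v :=
      hpar_out _ (fun h => (Finset.mem_erase.mp h).1 rfl)
    rw [hc'last] at heq
    omega
  -- Case A: both sets avoid the last vertex
  have caseA : ∀ s t : Finset (Fin (k+1)), s.Nonempty → t.Nonempty →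
      ((SimpleGraph.cycleGraph (k+1)).induce (↑s : Set (Fin (k+1)))).Connected →
      ((SimpleGraph.cycleGraph (k+1)).induce (↑t : Set (Fin (k+1)))).Connected →
      Fin.last k ∉ s → Fin.last k ∉ t → s ≠ t →
      ∑ v ∈ s, c' v ≠ ∑ v ∈ t, c' v := by
    intro s t hsne htne hcs hct hls hlt hst heq
    set s₀ := Finset.univ.filter (fun i : Fin k => Fin.castSucc i ∈ s) with hs₀
    set t₀ := Finset.univ.filter (fun i : Fin k => Fin.castSucc i ∈ t) with ht₀
    have hs_eq : s₀.image Fin.castSucc = s := image_filter_eq s hls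
    have ht_eq : t₀.image Fin.castSucc = t := image_filter_eq t hlt
    have hs₀ne : s₀.Nonempty := by
      rw [← Finset.image_nonempty (f := Fin.castSucc)]
      rw [hs_eq]; exact hsne
    have ht₀ne : t₀.Nonempty := by
      rw [← Finset.image_nonempty (f := Fin.castSucc)]
      rw [ht_eq]; exact htne
    have hne0 : s₀ ≠ t₀ := fun e => hst (by rw [← hs_eq, ← ht_eq, e])
    have hsum0 : ∑ i ∈ s₀, c i = ∑ i ∈ t₀, c i := by
      rw [← hs_eq, ← ht_eq, sum_image_castSucc c c' hc'cast, sum_image_castSucc c c' hc'cast]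
        at heq
      omega
    exact hc.2 s₀ t₀ hs₀ne ht₀ne (path_side hk s hcs hls) (path_side hk t hct hlt) hne0 hsum0
  -- connectivity of complements
  have hcompl : ∀ s : Finset (Fin (k+1)), s.Nonempty →
      ((SimpleGraph.cycleGraph (k+1)).induce (↑s : Set (Fin (k+1)))).Connected →
      s ≠ Finset.univ →
      ((SimpleGraph.cycleGraph (k+1)).induce
        (↑(Finset.univ \ s) : Set (Fin (k+1)))).Connected := by
    intro s hsne hcs hsu
    have : ∃ b : Fin (k+1), b ∉ s := by
      by_contra h
      push_neg at h
      exact hsu (Finset.eq_univ_iff_forall.mpr h)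
    obtain ⟨b, hb⟩ := this
    obtain ⟨m, M, h1, h2, h3, hchar⟩ := cycle_arc (by omega) s hsne hcs hb
    have harc := compl_arc (n := k+1) (by omega) b m M h1 h2 h3 s hchar
    rw [harc]
    exact arc_connected (by omega) _ _ (by omega) (by omega)
  -- the cycle assignment is SSD
  have hssd' : IsSSD (SimpleGraph.cycleGraph (k+1)) c' := by
    refine ⟨hc'pos, ?_⟩
    intro s t hsne htne hcs hct hst heq
    have hliff : (Fin.last k ∈ s) ↔ (Fin.last k ∈ t) := by
      constructor
      · intro h
        by_contra h2
        exact hpar_in s h (heq ▸ hpar_out t h2)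
      · intro h
        by_contra h2
        exact hpar_in t h (heq ▸ hpar_out s h2)
    by_cases hl : Fin.last k ∈ s
    · have hlt : Fin.last k ∈ t := hliff.mp hl
      by_cases hsu : s = Finset.univ <;> by_cases htu : t = Finset.univ
      · exact hst (hsu.trans htu.symm)
      · obtain ⟨x, hx⟩ : ∃ x, x ∉ t := by
          by_contra h; push_neg at h; exact htu (Finset.eq_univ_iff_forall.mpr h)
        have hlt2 : ∑ v ∈ t, c' v < ∑ v ∈ Finset.univ, c' v :=
          Finset.sum_lt_sum_of_subset (Finset.subset_univ t) (Finset.mem_univ x) hx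
            (hc'pos x) (fun j _ _ => Nat.zero_le _)
        rw [hsu] at heq
        omega
      · obtain ⟨x, hx⟩ : ∃ x, x ∉ s := by
          by_contra h; push_neg at h; exact hsu (Finset.eq_univ_iff_forall.mpr h)
        have hlt2 : ∑ v ∈ s, c' v < ∑ v ∈ Finset.univ, c' v :=
          Finset.sum_lt_sum_of_subset (Finset.subset_univ s) (Finset.mem_univ x) hx
            (hc'pos x) (fun j _ _ => Nat.zero_le _)
        rw [htu] at heq
        omega
      · -- both proper: pass to complements
        set s' := Finset.univ \ s with hs'
        set t' := Finset.univ \ t with ht'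
        have hs'ne : s'.Nonempty := by
          obtain ⟨x, hx⟩ : ∃ x, x ∉ s := by
            by_contra h; push_neg at h; exact hsu (Finset.eq_univ_iff_forall.mpr h)
          exact ⟨x, Finset.mem_sdiff.mpr ⟨Finset.mem_univ x, hx⟩⟩
        have ht'ne : t'.Nonempty := by
          obtain ⟨x, hx⟩ : ∃ x, x ∉ t := by
            by_contra h; push_neg at h; exact htu (Finset.eq_univ_iff_forall.mpr h)
          exact ⟨x, Finset.mem_sdiff.mpr ⟨Finset.mem_univ x, hx⟩⟩
        have hs'conn := hcompl s hsne hcs hsu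
        have ht'conn := hcompl t htne hct htu
        have hs'l : Fin.last k ∉ s' := fun h => (Finset.mem_sdiff.mp h).2 hl
        have ht'l : Fin.last k ∉ t' := fun h => (Finset.mem_sdiff.mp h).2 hlt
        have hne' : s' ≠ t' := by
          intro e
          apply hst
          rw [hs', ht'] at e
          have := congrArg (fun u => Finset.univ \ u) e
          simpa [Finset.sdiff_sdiff_self_left, Finset.univ_inter] using this
        have e1 : ∑ v ∈ s', c' v + ∑ v ∈ s, c' v = ∑ v ∈ Finset.univ, c' v :=
          Finset.sum_sdiff (Finset.subset_univ s)
        have e2 : ∑ v ∈ t', c' v + ∑ v ∈ t, c' v = ∑ v ∈ Finset.univ, c' v :=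
          Finset.sum_sdiff (Finset.subset_univ t)
        exact caseA s' t' hs'ne ht'ne hs'conn ht'conn hs'l ht'l hne' (by omega)
    · exact caseA s t hsne htne hcs hct hl (fun h => hl (hliff.mpr h)) hst heq
  -- conclude
  have h1 : mval (SimpleGraph.cycleGraph (k+1)) ≤ Finset.univ.sup c' :=
    Nat.sInf_le ⟨c', hssd', rfl⟩
  have h2 : Finset.univ.sup c' ≤ 2 * N := by
    refine Finset.sup_le (fun v _ => ?_)
    simp only [hc'def]
    by_cases h : v = Fin.last k
    · rw [dif_pos h]; omega
    · rw [dif_neg h]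
      have : c (v.castPred h) ≤ N := hsupN ▸ Finset.le_sup (Finset.mem_univ _)
      omega
  omega
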